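/- Let G be a finite group, 𝒳 a partial partition of Irr(G), and suppose there is a supercharacter theory (𝒴, 𝒦) with 𝒳 ⊆ 𝒴. Then 𝒴 refines the filtration ℱ(𝒳) and every member of 𝒳 belongs to ℱ(𝒳). -/

import Mathlib

open scoped Classical

/-- The set of irreducible characters of `G` over `ℂ`. -/
noncomputable def Irr (G : Type) [Group G] [Fintype G] : Set (G → ℂ) :=
  {χ | ∃ V : FDRep ℂ G, CategoryTheory.Simple V ∧ χ = V.character}

/-- The trivial character. -/
noncomputable def triv (G : Type) [Group G] [Fintype G] : G → ℂ := fun _ => 1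

/-- The Wedderburn sum `σ_X = ∑_{χ ∈ X} χ(1)·χ`. -/
noncomputable def wsum {G : Type} [Group G] [Fintype G] (X : Set (G → ℂ)) : G → ℂ :=
  fun g => ∑ᶠ χ ∈ X, χ 1 * χ g

/-- `P` is a partition of the set `S`. -/
def IsPartitionOf {α : Type*} (S : Set α) (P : Set (Set α)) : Prop :=
  (∀ p ∈ P, p.Nonempty ∧ p ⊆ S) ∧ ∀ a ∈ S, ∃! p, p ∈ P ∧ a ∈ p

/-- A partial partition of `Irr G`: nonempty pairwise disjoint subsets of `Irr G`. -/
def IsPartialPartition (G : Type) [Group G] [Fintype G] (P : Set (Set (G → ℂ))) : Prop :=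
  (∀ p ∈ P, p.Nonempty ∧ p ⊆ Irr G) ∧ ∀ p ∈ P, ∀ q ∈ P, p ≠ q → p ∩ q = ∅

/-- A supercharacter theory of `G` in the sense of Diaconis–Isaacs: `Y` partitions
`Irr G`, `K` partitions `G` with `{1} ∈ K`, `|Y| = |K|`, and every Wedderburn sum
`σ_X`, `X ∈ Y`, is constant on every member of `K`. -/
def IsSCT (G : Type) [Group G] [Fintype G] (Y : Set (Set (G → ℂ))) (K : Set (Set G)) : Prop :=
  IsPartitionOf (Irr G) Y ∧ IsPartitionOf (Set.univ : Set G) K ∧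
    ({(1 : G)} : Set G) ∈ K ∧ Y.ncard = K.ncard ∧
    ∀ X ∈ Y, ∀ k ∈ K, ∀ g ∈ k, ∀ h ∈ k, wsum X g = wsum X h

/-- The coefficient of `χ(1)·χ` in the expansion of the class function `a` in the
orthogonal basis `{φ(1)·φ : φ ∈ Irr G}` of `cf(G)`. -/
noncomputable def coeff {G : Type} [Group G] [Fintype G] (χ a : G → ℂ) : ℂ :=
  (∑ g : G, starRingEnd ℂ (χ g) * a g) / ((Fintype.card G : ℂ) * χ 1)

/-- The (non-unital) subalgebra of `cf(G)` generated by the Wedderburn sums of `𝒳`. -/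
noncomputable def wAlg (G : Type) [Group G] [Fintype G] (𝒳 : Set (Set (G → ℂ))) :
    NonUnitalSubalgebra ℂ (G → ℂ) :=
  NonUnitalAlgebra.adjoin ℂ {s | ∃ X ∈ 𝒳, s = wsum X}

/-- The equivalence relation defining the filtration `ℱ(𝒳)`: `χ ∼ ψ` iff the
coefficients of `χ(1)χ` and `ψ(1)ψ` agree in every element of the algebra `𝒜`. -/
def frel (G : Type) [Group G] [Fintype G] (𝒳 : Set (Set (G → ℂ))) (χ ψ : G → ℂ) : Prop :=
  ∀ a ∈ wAlg G 𝒳, coeff χ a = coeff ψ a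

/-- The filtration `ℱ(𝒳)`: the partition of `Irr G` into equivalence classes of `frel`. -/
def Filt (G : Type) [Group G] [Fintype G] (𝒳 : Set (Set (G → ℂ))) : Set (Set (G → ℂ)) :=
  {C | ∃ χ ∈ Irr G, C = {ψ ∈ Irr G | frel G 𝒳 χ ψ}}

section Aux

variable {G : Type} [Group G] [Fintype G]

lemma char_inv_conj (V : FDRep ℂ G) (g : G) :
    V.character g⁻¹ = starRingEnd ℂ (V.character g) := by
  classical
  set n := Fintype.card G with hn
  have hn0 : n ≠ 0 := Fintype.card_ne_zero
  set f : Module.End ℂ V := V.ρ g with hf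
  set f' : Module.End ℂ V := V.ρ g⁻¹ with hf'
  have hfn : f ^ n = 1 := by rw [hf, ← map_pow, pow_card_eq_one, map_one]
  have hff' : ∀ x : V, f' (f x) = x := by
    intro x
    have h1 : f' * f = 1 := by rw [hf, hf', ← map_mul, inv_mul_cancel, map_one]
    have := congrArg (fun F : Module.End ℂ V => F x) h1
    simpa using this
  have hss : f.IsSemisimple := by
    apply Module.End.isSemisimple_of_squarefree_aeval_eq_zero
      (p := Polynomial.X ^ n - Polynomial.C 1)
    · exact (Polynomial.separable_X_pow_sub_C (1:ℂ)
        (by exact_mod_cast (Nat.cast_ne_zero (R := ℂ)).mpr hn0) one_ne_zero).squarefree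
    · simp [map_sub, hfn, Polynomial.aeval_X_pow]
  set E : ℂ → Submodule ℂ V := f.eigenspace with hE
  have hindep := f.eigenspaces_iSupIndep
  have hsup : ⨆ μ, E μ = ⊤ := by
    have h1 := Module.End.iSup_maxGenEigenspace_eq_top f
    simp_rw [hss.isFinitelySemisimple.maxGenEigenspace_eq_eigenspace] at h1
    exact h1
  have hInt : DirectSum.IsInternal E :=
    DirectSum.isInternal_submodule_of_iSupIndep_of_iSup_eq_top hindep hsup
  have hfinE : {μ | E μ ≠ ⊥}.Finite := WellFoundedGT.finite_ne_bot_of_iSupIndep hindep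
  have hmapsf : ∀ μ, Set.MapsTo f (E μ) (E μ) := by
    intro μ x hx
    have h2 : f x = μ • x := Module.End.mem_eigenspace_iff.mp hx
    show f x ∈ E μ
    rw [h2]; exact Submodule.smul_mem _ _ hx
  have hμn : ∀ μ, E μ ≠ ⊥ → μ ^ n = 1 := by
    intro μ hμ
    obtain ⟨x, hx, hx0⟩ := (Submodule.ne_bot_iff _).mp hμ
    have hev : f.HasEigenvector μ x := ⟨hx, hx0⟩
    have h3 := hev.pow_apply n
    rw [hfn] at h3
    have h4 : (μ ^ n - 1) • x = 0 := by rw [sub_smul, one_smul, ← h3]; simp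
    rcases smul_eq_zero.mp h4 with h | h
    · exact sub_eq_zero.mp h
    · exact absurd h hx0
  have hf'eig : ∀ μ, ∀ x ∈ E μ, f' x = μ⁻¹ • x := by
    intro μ x hx
    by_cases hμ : E μ = ⊥
    · have hx0 : x = 0 := by simpa [hμ] using hx
      simp [hx0]
    · have hμ0 : μ ≠ 0 := by
        intro h0
        have := hμn μ hμ
        rw [h0, zero_pow hn0] at this
        exact zero_ne_one this
      have hfx : f x = μ • x := Module.End.mem_eigenspace_iff.mp hx
      have h1 : x = μ • f' x := by
        conv_lhs => rw [← hff' x, hfx, map_smul]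
      calc f' x = μ⁻¹ • (μ • f' x) := by rw [smul_smul, inv_mul_cancel₀ hμ0, one_smul]
      _ = μ⁻¹ • x := by rw [← h1]
  have hmapsf' : ∀ μ, Set.MapsTo f' (E μ) (E μ) := by
    intro μ x hx
    show f' x ∈ E μ
    rw [hf'eig μ x hx]; exact Submodule.smul_mem _ _ hx
  have key : ∀ (h : Module.End ℂ V) (hm : ∀ μ, Set.MapsTo h (E μ) (E μ)) (c : ℂ → ℂ),
      (∀ μ, ∀ x ∈ E μ, h x = c μ • x) →
      LinearMap.trace ℂ V h = ∑ μ ∈ hfinE.toFinset, c μ * (Module.finrank ℂ (E μ) : ℂ) := by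
    intro h hm c hc
    rw [LinearMap.trace_eq_sum_trace_restrict' hInt hfinE hm]
    refine Finset.sum_congr rfl fun μ _ => ?_
    have hres : h.restrict (hm μ) = (c μ) • LinearMap.id := by
      ext x
      simp only [LinearMap.smul_apply, LinearMap.id_coe, id_eq, Submodule.coe_smul]; exact hc μ x.1 x.2
    rw [hres, LinearMap.map_smul, LinearMap.trace_id, smul_eq_mul]
  have t1 : V.character g = ∑ μ ∈ hfinE.toFinset, μ * (Module.finrank ℂ (E μ) : ℂ) :=
    key f hmapsf (fun μ => μ) (fun μ x hx => Module.End.mem_eigenspace_iff.mp hx)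
  have t2 : V.character g⁻¹ = ∑ μ ∈ hfinE.toFinset, μ⁻¹ * (Module.finrank ℂ (E μ) : ℂ) :=
    key f' hmapsf' (fun μ => μ⁻¹) hf'eig
  rw [t1, t2, map_sum]
  refine Finset.sum_congr rfl fun μ hμ => ?_
  have hμb : E μ ≠ ⊥ := by simpa using (Set.Finite.mem_toFinset hfinE).mp hμ
  have hpow := hμn μ hμb
  have hnorm : ‖μ‖ = 1 := by
    have h1 : ‖μ‖ ^ n = 1 := by rw [← norm_pow, hpow, norm_one]
    rcases lt_trichotomy ‖μ‖ 1 with h | h | h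
    · exact absurd h1 (by have := pow_lt_one₀ (norm_nonneg μ) h hn0; linarith)
    · exact h
    · exact absurd h1 (by have := one_lt_pow₀ h hn0; linarith)
  rw [map_mul, map_natCast, Complex.inv_eq_conj hnorm]

lemma cardC_ne_zero : (Fintype.card G : ℂ) ≠ 0 :=
  Nat.cast_ne_zero.mpr Fintype.card_ne_zero

/-- The pairing functional `a ↦ ∑_g conj (χ g) * a g`, as a linear map. -/
noncomputable def Lmap (χ : G → ℂ) : (G → ℂ) →ₗ[ℂ] ℂ where
  toFun a := ∑ g : G, starRingEnd ℂ (χ g) * a g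
  map_add' a b := by simp [mul_add, Finset.sum_add_distrib]
  map_smul' c a := by
    simp only [Pi.smul_apply, smul_eq_mul, RingHom.id_apply, Finset.mul_sum]
    exact Finset.sum_congr rfl fun g _ => by ring

lemma coeff_eq (χ a : G → ℂ) :
    coeff χ a = Lmap χ a / ((Fintype.card G : ℂ) * χ 1) := rfl

lemma orth {χ ψ : G → ℂ} (hχ : χ ∈ Irr G) (hψ : ψ ∈ Irr G) :
    Lmap χ ψ = if χ = ψ then (Fintype.card G : ℂ) else 0 := by
  obtain ⟨V, hV, hχV⟩ := hχ
  obtain ⟨W, hW, hψW⟩ := hψ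
  haveI := hV; haveI := hW
  haveI : Invertible (Fintype.card G : ℂ) := invertibleOfNonzero cardC_ne_zero
  letI : Invertible ((Nat.card G) : ℂ) := Nat.card_eq_fintype_card (α := G) ▸ ‹Invertible (Fintype.card G : ℂ)›
  have hL : Lmap χ ψ = ∑ g : G, ψ g * χ g⁻¹ := by
    simp only [Lmap, LinearMap.coe_mk, AddHom.coe_mk]
    refine Finset.sum_congr rfl fun g _ => ?_
    rw [hχV, ← char_inv_conj, mul_comm]
  by_cases h : χ = ψ
  · rw [if_pos h]
    have horth := FDRep.char_orthonormal (G := G) V V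
    rw [if_pos ⟨CategoryTheory.Iso.refl V⟩] at horth
    have hsum : ∑ g : G, ψ g * χ g⁻¹ = ∑ g : G, V.character g * V.character g⁻¹ := by
      refine Finset.sum_congr rfl fun g _ => ?_
      rw [← h, hχV]
    rw [hL, hsum]
    have horth' : (Fintype.card G : ℂ)⁻¹ * (∑ g : G, V.character g * V.character g⁻¹) = 1 := by
      rw [Nat.card_eq_fintype_card] at horth
      exact_mod_cast horth
    calc ∑ g : G, V.character g * V.character g⁻¹
        = (Fintype.card G : ℂ) * ((Fintype.card G : ℂ)⁻¹ *
            ∑ g : G, V.character g * V.character g⁻¹) := by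
          rw [← mul_assoc, mul_inv_cancel₀ (cardC_ne_zero (G := G)), one_mul]
      _ = (Fintype.card G : ℂ) := by rw [horth', mul_one]
  · rw [if_neg h]
    have hni : ¬ Nonempty (W ≅ V) := by
      rintro ⟨i⟩
      exact h (by rw [hχV, hψW, FDRep.char_iso i])
    have horth := FDRep.char_orthonormal (G := G) W V
    rw [if_neg hni] at horth
    have hsum : ∑ g : G, ψ g * χ g⁻¹ = ∑ g : G, W.character g * V.character g⁻¹ := by
      refine Finset.sum_congr rfl fun g _ => ?_
      rw [hχV, hψW]
    rw [hL, hsum]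
    have horth' : (Fintype.card G : ℂ)⁻¹ * (∑ g : G, W.character g * V.character g⁻¹) = 0 := by
      rw [Nat.card_eq_fintype_card] at horth
      exact_mod_cast horth
    calc ∑ g : G, W.character g * V.character g⁻¹
        = (Fintype.card G : ℂ) * ((Fintype.card G : ℂ)⁻¹ *
            ∑ g : G, W.character g * V.character g⁻¹) := by
          rw [← mul_assoc, mul_inv_cancel₀ (cardC_ne_zero (G := G)), one_mul]
      _ = 0 := by rw [horth', mul_zero]

lemma irr_finite : (Irr G).Finite := by
  have hli : LinearIndependent ℂ (fun χ : (Irr G) => (χ : G → ℂ)) := by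
    rw [linearIndependent_iff']
    intro s c hsum i hi
    have h1 := congrArg (Lmap (i : G → ℂ)) hsum
    rw [map_sum, map_zero] at h1
    have h2 : ∀ j ∈ s, Lmap (i : G → ℂ) (c j • (j : G → ℂ)) =
        if (i : G → ℂ) = (j : G → ℂ) then c j * (Fintype.card G : ℂ) else 0 := by
      intro j _
      rw [map_smul, smul_eq_mul, orth i.2 j.2]
      by_cases h : (i : G → ℂ) = (j : G → ℂ) <;> simp [h]
    rw [Finset.sum_congr rfl h2] at h1
    rw [Finset.sum_eq_single i
      (fun j _ hj => if_neg (fun hc => hj (Subtype.ext hc.symm)))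
      (fun hni => absurd hi hni), if_pos rfl] at h1
    exact (mul_eq_zero.mp h1).resolve_right cardC_ne_zero
  exact hli.setFinite

lemma irr_one_ne_zero {χ : G → ℂ} (hχ : χ ∈ Irr G) : χ 1 ≠ 0 := by
  intro h0
  obtain ⟨V, hV, rfl⟩ := hχ
  have hfr : Module.finrank ℂ V = 0 := by
    have h1 := FDRep.char_one V
    rw [h1] at h0
    exact_mod_cast h0
  haveI : Subsingleton V := Module.finrank_zero_iff.mp hfr
  have hz : ∀ g : G, V.character g = 0 := by
    intro g
    have h2 : V.ρ g = 0 := Subsingleton.elim _ _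
    simp [FDRep.character, h2]
  have horth := orth (G := G) ⟨V, hV, rfl⟩ ⟨V, hV, rfl⟩
  rw [if_pos rfl] at horth
  have hzero : Lmap V.character V.character = 0 := by
    simp [Lmap, hz]
  rw [hzero] at horth
  exact cardC_ne_zero horth.symm

lemma pair_wsum {X : Set (G → ℂ)} {χ : G → ℂ} (hX : X ⊆ Irr G) (hχ : χ ∈ Irr G) :
    Lmap χ (wsum X) = if χ ∈ X then (Fintype.card G : ℂ) * χ 1 else 0 := by
  have hXf : X.Finite := irr_finite.subset hX
  have hw : wsum X = ∑ φ ∈ hXf.toFinset, (φ 1) • φ := by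
    funext g
    show (∑ᶠ φ ∈ X, φ 1 * φ g) = _
    rw [Finset.sum_apply]
    simp only [Pi.smul_apply, smul_eq_mul]
    conv_lhs => rw [← Set.Finite.coe_toFinset hXf]
    exact finsum_mem_coe_finset _ _
  rw [hw, map_sum]
  have hterm : ∀ φ ∈ hXf.toFinset, Lmap χ ((φ 1) • φ) =
      if χ = φ then φ 1 * (Fintype.card G : ℂ) else 0 := by
    intro φ hφ
    have hφX : φ ∈ X := (Set.Finite.mem_toFinset hXf).mp hφ
    rw [map_smul, smul_eq_mul, orth hχ (hX hφX)]
    by_cases h : χ = φ <;> simp [h]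
  rw [Finset.sum_congr rfl hterm]
  by_cases hmem : χ ∈ X
  · rw [if_pos hmem]
    rw [Finset.sum_eq_single χ
      (fun φ _ hφ => if_neg (fun hc => hφ (hc.symm)))
      (fun hni => absurd ((Set.Finite.mem_toFinset hXf).mpr hmem) hni), if_pos rfl]
    ring
  · rw [if_neg hmem]
    refine Finset.sum_eq_zero fun φ hφ => ?_
    have hφX : φ ∈ X := (Set.Finite.mem_toFinset hXf).mp hφ
    exact if_neg (fun hc => hmem (by rw [hc]; exact hφX))

lemma coeff_wsum {X : Set (G → ℂ)} {χ : G → ℂ} (hX : X ⊆ Irr G) (hχ : χ ∈ Irr G) :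
    coeff χ (wsum X) = if χ ∈ X then 1 else 0 := by
  rw [coeff_eq, pair_wsum hX hχ]
  by_cases h : χ ∈ X
  · rw [if_pos h, if_pos h,
      div_self (mul_ne_zero cardC_ne_zero (irr_one_ne_zero hχ))]
  · rw [if_neg h, if_neg h, zero_div]

/-- The non-unital subalgebra of functions constant on each member of `K`. -/
noncomputable def KCsub (G : Type) [Group G] [Fintype G] (K : Set (Set G)) :
    NonUnitalSubalgebra ℂ (G → ℂ) where
  carrier := {a | ∀ k ∈ K, ∀ g ∈ k, ∀ h ∈ k, a g = a h}
  add_mem' := by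
    intro a b ha hb k hk g hg h hh
    simp only [Pi.add_apply, ha k hk g hg h hh, hb k hk g hg h hh]
  zero_mem' := by intro k hk g hg h hh; rfl
  mul_mem' := by
    intro a b ha hb k hk g hg h hh
    simp only [Pi.mul_apply, ha k hk g hg h hh, hb k hk g hg h hh]
  smul_mem' := by
    intro c a ha k hk g hg h hh
    simp only [Pi.smul_apply, ha k hk g hg h hh]

/-- Every function constant on the members of `K` lies in the span of the
Wedderburn sums of the parts of `Y`. -/
lemma const_mem_span {Y : Set (Set (G → ℂ))} {K : Set (Set G)} (hsct : IsSCT G Y K)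
    {a : G → ℂ} (ha : ∀ k ∈ K, ∀ g ∈ k, ∀ h ∈ k, a g = a h) :
    a ∈ Submodule.span ℂ (wsum '' Y) := by
  obtain ⟨hY, hK, -, hcard, hconst⟩ := hsct
  set W := Submodule.span ℂ (wsum '' Y) with hWdef
  set Vs : Submodule ℂ (G → ℂ) :=
    { carrier := {b | ∀ k ∈ K, ∀ g ∈ k, ∀ h ∈ k, b g = b h}
      add_mem' := fun hb hc k hk g hg h hh => by
        simp only [Pi.add_apply, hb k hk g hg h hh, hc k hk g hg h hh]
      zero_mem' := fun k hk g hg h hh => rfl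
      smul_mem' := fun c b hb k hk g hg h hh => by
        simp only [Pi.smul_apply, hb k hk g hg h hh] } with hVsdef
  have hWV : W ≤ Vs := by
    rw [hWdef, Submodule.span_le]
    rintro - ⟨p, hp, rfl⟩ k hk g hg h hh
    exact hconst p hp k hk g hg h hh
  have hYfin : Y.Finite :=
    (irr_finite (G := G)).finite_subsets.subset (fun p hp => (hY.1 p hp).2)
  have hKfin : K.Finite := Set.toFinite K
  haveI : Fintype ↥Y := hYfin.fintype
  haveI : Fintype ↥K := hKfin.fintype
  -- linear independence of the Wedderburn sums
  have hli : LinearIndependent ℂ (fun p : ↥Y => wsum (p : Set (G → ℂ))) := by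
    rw [linearIndependent_iff']
    intro s c hsum i hi
    obtain ⟨χ0, hχ0⟩ := (hY.1 i i.2).1
    have hχ0Irr : χ0 ∈ Irr G := (hY.1 i i.2).2 hχ0
    have h1 := congrArg (Lmap χ0) hsum
    rw [map_sum, map_zero] at h1
    have h2 : ∀ j ∈ s, Lmap χ0 (c j • wsum (j : Set (G → ℂ))) =
        if j = i then c j * ((Fintype.card G : ℂ) * χ0 1) else 0 := by
      intro j _
      rw [map_smul, smul_eq_mul, pair_wsum (hY.1 j j.2).2 hχ0Irr]
      by_cases h : (j : Set (G → ℂ)) = (i : Set (G → ℂ))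
      · have : χ0 ∈ (j : Set (G → ℂ)) := h ▸ hχ0
        rw [if_pos this, if_pos (Subtype.ext h)]
      · have hn : χ0 ∉ (j : Set (G → ℂ)) := by
          intro hmem
          obtain ⟨p0, -, huniq⟩ := hY.2 χ0 hχ0Irr
          exact h ((huniq _ ⟨j.2, hmem⟩).trans (huniq _ ⟨i.2, hχ0⟩).symm)
        rw [if_neg hn, if_neg (fun hc => h (congrArg Subtype.val hc)), mul_zero]
    rw [Finset.sum_congr rfl h2, Finset.sum_eq_single i
      (fun j _ hj => if_neg hj) (fun hni => absurd hi hni), if_pos rfl] at h1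
    exact (mul_eq_zero.mp h1).resolve_right
      (mul_ne_zero cardC_ne_zero (irr_one_ne_zero hχ0Irr))
  have hrange : Set.range (fun p : ↥Y => wsum (p : Set (G → ℂ))) = wsum '' Y :=
    (Set.image_eq_range wsum Y).symm
  have hfrW : Module.finrank ℂ W = Y.ncard := by
    rw [hWdef, ← hrange, finrank_span_eq_card hli, ← Nat.card_coe_set_eq,
      Nat.card_eq_fintype_card]
  -- upper bound on the dimension of Vs
  have hrep : ∀ k : ↥K, ∃ g : G, g ∈ (k : Set G) := fun k => (hK.1 k k.2).1
  choose rep hrepmem using hrep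
  have hΦinj : Function.Injective
      ((LinearMap.funLeft ℂ ℂ (fun k : ↥K => rep k)).comp Vs.subtype) := by
    intro a b hab
    apply Subtype.ext
    funext g
    obtain ⟨p, ⟨hpK, hgp⟩, -⟩ := hK.2 g (Set.mem_univ g)
    have h1 : a.1 g = a.1 (rep ⟨p, hpK⟩) :=
      a.2 p hpK g hgp (rep ⟨p, hpK⟩) (hrepmem ⟨p, hpK⟩)
    have h2 : b.1 g = b.1 (rep ⟨p, hpK⟩) :=
      b.2 p hpK g hgp (rep ⟨p, hpK⟩) (hrepmem ⟨p, hpK⟩)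
    have h3 : a.1 (rep ⟨p, hpK⟩) = b.1 (rep ⟨p, hpK⟩) := congrFun hab ⟨p, hpK⟩
    rw [h1, h3, ← h2]
  have hfrV : Module.finrank ℂ Vs ≤ K.ncard := by
    have h5 := LinearMap.finrank_le_finrank_of_injective hΦinj
    rw [Module.finrank_pi] at h5
    rwa [← Nat.card_coe_set_eq K, Nat.card_eq_fintype_card]
  have heq : W = Vs := Submodule.eq_of_le_of_finrank_le hWV (by rw [hfrW, hcard]; exact hfrV)
  show a ∈ W
  rw [heq]
  exact ha

lemma coeff_add (χ a b : G → ℂ) : coeff χ (a + b) = coeff χ a + coeff χ b := by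
  rw [coeff_eq, coeff_eq, coeff_eq, map_add, add_div]

lemma coeff_smul (c : ℂ) (χ a : G → ℂ) : coeff χ (c • a) = c * coeff χ a := by
  rw [coeff_eq, coeff_eq, map_smul, smul_eq_mul, mul_div_assoc]

lemma coeff_zero (χ : G → ℂ) : coeff χ 0 = 0 := by
  rw [coeff_eq, map_zero, zero_div]

/-- Irreducible characters lying in the same part of the supercharacter partition
are `frel`-related. -/
lemma frel_of_samepart {𝒳 Y : Set (Set (G → ℂ))} {K : Set (Set G)}
    (hsct : IsSCT G Y K) (hsub : 𝒳 ⊆ Y) {p : Set (G → ℂ)} (hp : p ∈ Y)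
    {χ ψ : G → ℂ} (hχ : χ ∈ p) (hψ : ψ ∈ p) : frel G 𝒳 χ ψ := by
  intro a ha
  have haK : a ∈ KCsub G K := by
    refine NonUnitalAlgebra.adjoin_le ?_ ha
    rintro - ⟨X, hX𝒳, rfl⟩
    exact hsct.2.2.2.2 X (hsub hX𝒳)
  have haspan : a ∈ Submodule.span ℂ (wsum '' Y) := const_mem_span hsct haK
  have hχIrr : χ ∈ Irr G := (hsct.1.1 p hp).2 hχ
  have hψIrr : ψ ∈ Irr G := (hsct.1.1 p hp).2 hψ
  clear haK ha
  induction haspan using Submodule.span_induction with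
  | mem x hx =>
    obtain ⟨q, hq, rfl⟩ := hx
    rw [coeff_wsum (hsct.1.1 q hq).2 hχIrr, coeff_wsum (hsct.1.1 q hq).2 hψIrr]
    have hiff : χ ∈ q ↔ ψ ∈ q := by
      constructor
      · intro hχq
        obtain ⟨p0, -, huniq⟩ := hsct.1.2 χ hχIrr
        have : q = p := (huniq _ ⟨hq, hχq⟩).trans (huniq _ ⟨hp, hχ⟩).symm
        exact this ▸ hψ
      · intro hψq
        obtain ⟨p0, -, huniq⟩ := hsct.1.2 ψ hψIrr
        have : q = p := (huniq _ ⟨hq, hψq⟩).trans (huniq _ ⟨hp, hψ⟩).symm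
        exact this ▸ hχ
    by_cases h : χ ∈ q
    · rw [if_pos h, if_pos (hiff.mp h)]
    · rw [if_neg h, if_neg (fun hc => h (hiff.mpr hc))]
  | zero => rw [coeff_zero, coeff_zero]
  | add x y hx hy ihx ihy => rw [coeff_add, coeff_add, ihx, ihy]
  | smul c x hx ihx => rw [coeff_smul, coeff_smul, ihx]

end Aux

/-- if `𝒳` is a partial partition of `Irr G` contained in the character
partition `Y` of some supercharacter theory `(Y, K)`, then `Y` refines the filtration
`ℱ(𝒳)` (each member of `ℱ(𝒳)` is a union of members of `Y`) and `𝒳 ⊆ ℱ(𝒳)`. -/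
theorem stmt7 (G : Type) [Group G] [Fintype G] (𝒳 Y : Set (Set (G → ℂ))) (K : Set (Set G))
    (hpp : IsPartialPartition G 𝒳) (hsct : IsSCT G Y K) (hsub : 𝒳 ⊆ Y) :
    (∀ F ∈ Filt G 𝒳, F = ⋃₀ {p ∈ Y | p ⊆ F}) ∧ 𝒳 ⊆ Filt G 𝒳 := by
  constructor
  · rintro F ⟨χ0, hχ0, rfl⟩
    apply Set.eq_of_subset_of_subset
    · intro ψ hψ
      obtain ⟨hψIrr, hψfrel⟩ := hψ
      obtain ⟨p, ⟨hpY, hψp⟩, -⟩ := hsct.1.2 ψ hψIrr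
      refine ⟨p, ⟨hpY, ?_⟩, hψp⟩
      intro φ hφp
      have hφIrr : φ ∈ Irr G := (hsct.1.1 p hpY).2 hφp
      refine ⟨hφIrr, ?_⟩
      intro a ha
      rw [hψfrel a ha]
      exact frel_of_samepart hsct hsub hpY hψp hφp a ha
    · rintro ψ ⟨p, ⟨hpY, hpF⟩, hψp⟩
      exact hpF hψp
  · intro X hX𝒳
    have hXY : X ∈ Y := hsub hX𝒳
    obtain ⟨χ0, hχ0X⟩ := (hsct.1.1 X hXY).1
    have hχ0Irr : χ0 ∈ Irr G := (hsct.1.1 X hXY).2 hχ0X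
    refine ⟨χ0, hχ0Irr, ?_⟩
    apply Set.eq_of_subset_of_subset
    · intro ψ hψX
      exact ⟨(hsct.1.1 X hXY).2 hψX, frel_of_samepart hsct hsub hXY hχ0X hψX⟩
    · rintro ψ ⟨hψIrr, hψfrel⟩
      have hmemwAlg : wsum X ∈ wAlg G 𝒳 :=
        NonUnitalAlgebra.subset_adjoin ℂ ⟨X, hX𝒳, rfl⟩
      have h1 := hψfrel (wsum X) hmemwAlg
      rw [coeff_wsum (hsct.1.1 X hXY).2 hχ0Irr,
        coeff_wsum (hsct.1.1 X hXY).2 hψIrr, if_pos hχ0X] at h1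
      by_contra hne
      rw [if_neg hne] at h1
      exact one_ne_zero h1
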